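/- For all integers 0 ≤ k ≤ n there exists a collection of [n choose k]₂ mutually orthogonal permutations of Gr₂(n,k) such that, for each 0 ≤ m ≤ k, exactly 2^{(k−m)²} · [n−k choose k−m]₂ · [k choose m]₂ of them have the m-intersection property. -/

import Mathlib

/-- The Gaussian binomial coefficient `[n choose k]₂`, as a natural number:
`∏_{i=0}^{k-1}(2^{n-i}-1) / ∏_{i=0}^{k-1}(2^{k-i}-1)` (the division is exact). -/
def gbinomN (n k : ℕ) : ℕ :=
  (∏ i ∈ Finset.range k, (2 ^ (n - i) - 1)) / (∏ i ∈ Finset.range k, (2 ^ (k - i) - 1))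

/-- The Grassmannian `Gr₂(n,k)`: the set of `k`-dimensional subspaces of `𝔽₂ⁿ`. -/
abbrev Grassmannian (n k : ℕ) :=
  {W : Submodule (ZMod 2) (Fin n → ZMod 2) // Module.finrank (ZMod 2) W = k}

/-- A permutation of `Gr₂(n,k)` has the `m`-intersection property if
`dim(W ∩ π(W)) = m` for every `W`. -/
def HasIntersectionProperty {n k : ℕ} (π : Equiv.Perm (Grassmannian n k)) (m : ℕ) : Prop :=
  ∀ W : Grassmannian n k,
    Module.finrank (ZMod 2) ↥((W : Submodule (ZMod 2) (Fin n → ZMod 2)) ⊓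
      ((π W : Grassmannian n k) : Submodule (ZMod 2) (Fin n → ZMod 2))) = m

open Module Finset

noncomputable section

lemma nat_card_sigma_const {ι : Type*} [Finite ι] {f : ι → Type*} [∀ i, Finite (f i)] {c : ℕ}
    (h : ∀ i, Nat.card (f i) = c) : Nat.card (Σ i, f i) = Nat.card ι * c := by
  cases nonempty_fintype ι
  have := fun i => Fintype.ofFinite (f i)
  simp only [Nat.card_eq_fintype_card] at h ⊢
  simp [Fintype.card_sigma, h, Finset.sum_const, mul_comm]

variable {V : Type*} [AddCommGroup V] [Module (ZMod 2) V] [Finite V]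

instance : Finite (Submodule (ZMod 2) V) :=
  Finite.of_injective (fun W => (W : Set V)) SetLike.coe_injective

lemma card_zmod2 : Fintype.card (ZMod 2) = 2 := rfl

/-- counting: card of k-Grassmannian times #bases = #independent tuples -/
lemma grass_count (k : ℕ) :
    Nat.card {W : Submodule (ZMod 2) V // finrank (ZMod 2) W = k} *
      ∏ i : Fin k, (2 ^ k - 2 ^ i.val) = ∏ i : Fin k, (2 ^ finrank (ZMod 2) V - 2 ^ i.val) := by
  classical
  have : FiniteDimensional (ZMod 2) V := Module.Finite.of_finite
  set n := finrank (ZMod 2) V with hn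
  -- the fibration
  set Φ : {s : Fin k → V // LinearIndependent (ZMod 2) s} →
      {W : Submodule (ZMod 2) V // finrank (ZMod 2) W = k} :=
    fun s => ⟨Submodule.span (ZMod 2) (Set.range s.1), by
      rw [finrank_span_eq_card s.2, Fintype.card_fin]⟩ with hΦ
  have key : ∀ W : {W : Submodule (ZMod 2) V // finrank (ZMod 2) W = k},
      Nat.card {s : {s : Fin k → V // LinearIndependent (ZMod 2) s} // Φ s = W} =
        ∏ i : Fin k, (2 ^ k - 2 ^ i.val) := by
    intro W
    have e : {s : {s : Fin k → V // LinearIndependent (ZMod 2) s} // Φ s = W} ≃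
        {s : Fin k → W.1 // LinearIndependent (ZMod 2) s} := by
      refine ⟨fun s => ⟨fun i => ⟨s.1.1 i, ?_⟩, ?_⟩, fun s => ⟨⟨fun i => (s.1 i : V), ?_⟩, ?_⟩,
        ?_, ?_⟩
      · have hsp : Submodule.span (ZMod 2) (Set.range s.1.1) = W.1 := congrArg Subtype.val s.2
        rw [← hsp]; exact Submodule.subset_span ⟨i, rfl⟩
      · -- independence of the lift
        apply LinearIndependent.of_comp W.1.subtype
        convert s.1.2 using 1
        rfl
      · exact s.2.map' W.1.subtype (Submodule.ker_subtype _)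
      · apply Subtype.ext
        simp only [hΦ]
        have h1 : Set.range (fun i => (s.1 i : V)) = W.1.subtype '' Set.range s.1 := by
          rw [← Set.range_comp]; rfl
        rw [h1, ← Submodule.map_span]
        have hsp : Submodule.span (ZMod 2) (Set.range s.1) = (⊤ : Submodule (ZMod 2) W.1) := by
          apply Submodule.eq_top_of_finrank_eq
          rw [finrank_span_eq_card s.2, Fintype.card_fin, W.2]
        rw [hsp, Submodule.map_subtype_top]
      · intro s; apply Subtype.ext; apply Subtype.ext; rfl
      · intro s; apply Subtype.ext; funext i; apply Subtype.ext; rfl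
    rw [Nat.card_congr e]
    have hW : finrank (ZMod 2) W.1 = k := W.2
    have := card_linearIndependent (K := ZMod 2) (V := W.1) (k := k) (le_of_eq hW.symm)
    rw [this, hW, card_zmod2]
  have total : Nat.card {s : Fin k → V // LinearIndependent (ZMod 2) s} =
      ∏ i : Fin k, (2 ^ n - 2 ^ i.val) := by
    by_cases hk : k ≤ n
    · have := card_linearIndependent (K := ZMod 2) (V := V) (k := k) hk
      rw [this, card_zmod2, hn]
    · -- no independent tuples, and the product has a zero factor
      push_neg at hk
      have h0 : IsEmpty {s : Fin k → V // LinearIndependent (ZMod 2) s} := by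
        constructor; rintro ⟨s, hs⟩
        have := hs.fintype_card_le_finrank
        rw [Fintype.card_fin] at this
        omega
      rw [Nat.card_of_isEmpty]
      have : (2 : ℕ) ^ n - 2 ^ (⟨n, hk⟩ : Fin k).val = 0 := by simp
      rw [eq_comm, Finset.prod_eq_zero (Finset.mem_univ (⟨n, hk⟩ : Fin k)) this]
  rw [← total, ← nat_card_sigma_const key, Nat.card_congr (Equiv.sigmaFiberEquiv Φ)]

lemma prod_pow_sub_pow (a k : ℕ) (hk : k ≤ a) :
    ∏ i ∈ Finset.range k, (2 ^ a - 2 ^ i) =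
      2 ^ (∑ i ∈ Finset.range k, i) * ∏ i ∈ Finset.range k, (2 ^ (a - i) - 1) := by
  rw [← Finset.prod_pow_eq_pow_sum, ← Finset.prod_mul_distrib]
  apply Finset.prod_congr rfl
  intro i hi
  rw [Finset.mem_range] at hi
  have hia : i ≤ a := le_trans (le_of_lt hi) hk
  have hsum : i + (a - i) = a := by omega
  rw [Nat.mul_sub, mul_one, ← pow_add, hsum]

lemma prod_gk_pos (k : ℕ) : 0 < ∏ i ∈ Finset.range k, (2 ^ (k - i) - 1) := by
  apply Finset.prod_pos
  intro i hi
  rw [Finset.mem_range] at hi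
  have : 2 ^ 1 ≤ 2 ^ (k - i) := Nat.pow_le_pow_right (by norm_num) (by omega)
  omega

lemma card_grassmannian (k : ℕ) :
    Nat.card {W : Submodule (ZMod 2) V // finrank (ZMod 2) W = k} =
      gbinomN (finrank (ZMod 2) V) k := by
  have : FiniteDimensional (ZMod 2) V := Module.Finite.of_finite
  set n := finrank (ZMod 2) V with hn
  by_cases hk : k ≤ n
  · have h := grass_count (V := V) k
    rw [← hn] at h
    rw [Fin.prod_univ_eq_prod_range (fun i => 2 ^ k - 2 ^ i) k,
      Fin.prod_univ_eq_prod_range (fun i => 2 ^ n - 2 ^ i) k] at h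
    rw [prod_pow_sub_pow n k hk, prod_pow_sub_pow k k le_rfl] at h
    have h2 : Nat.card {W : Submodule (ZMod 2) V // finrank (ZMod 2) W = k} *
        ∏ i ∈ Finset.range k, (2 ^ (k - i) - 1) = ∏ i ∈ Finset.range k, (2 ^ (n - i) - 1) := by
      have hpos : 0 < 2 ^ (∑ i ∈ Finset.range k, i) := Nat.pow_pos (by norm_num)
      apply Nat.eq_of_mul_eq_mul_left hpos
      calc 2 ^ (∑ i ∈ Finset.range k, i) *
            (Nat.card {W : Submodule (ZMod 2) V // finrank (ZMod 2) W = k} *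
              ∏ i ∈ Finset.range k, (2 ^ (k - i) - 1))
          = Nat.card {W : Submodule (ZMod 2) V // finrank (ZMod 2) W = k} *
            (2 ^ (∑ i ∈ Finset.range k, i) * ∏ i ∈ Finset.range k, (2 ^ (k - i) - 1)) := by ring
        _ = _ := by rw [h]
    rw [gbinomN, ← h2, Nat.mul_div_cancel _ (prod_gk_pos k)]
  · push_neg at hk
    have h0 : IsEmpty {W : Submodule (ZMod 2) V // finrank (ZMod 2) W = k} := by
      constructor; rintro ⟨W, hW⟩
      have := Submodule.finrank_le W
      rw [hW, ← hn] at this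
      omega
    rw [Nat.card_of_isEmpty, gbinomN, eq_comm]
    have hmem : n ∈ Finset.range k := Finset.mem_range.mpr hk
    have : (2:ℕ) ^ (n - n) - 1 = 0 := by simp
    rw [Finset.prod_eq_zero hmem this, Nat.zero_div]


section ProdCount

variable {V₁ V₂ : Type*} [AddCommGroup V₁] [Module (ZMod 2) V₁] [Finite V₁]
  [AddCommGroup V₂] [Module (ZMod 2) V₂] [Finite V₂]

/-- a chosen complement -/
def cpl (S : Submodule (ZMod 2) V₁) : Submodule (ZMod 2) V₁ :=
  (Submodule.exists_isCompl S).choose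

lemma cpl_isCompl (S : Submodule (ZMod 2) V₁) : IsCompl S (cpl S) :=
  (Submodule.exists_isCompl S).choose_spec

variable {S : Submodule (ZMod 2) V₁} {T : Submodule (ZMod 2) V₂}

/-- the map whose range is the subspace encoded by `(S, T, φ)` -/
def bmap (φ : T →ₗ[ZMod 2] cpl S) : (S × T) →ₗ[ZMod 2] V₁ × V₂ :=
  LinearMap.prod
    (S.subtype ∘ₗ LinearMap.fst (ZMod 2) S T +
      (cpl S).subtype ∘ₗ φ ∘ₗ LinearMap.snd (ZMod 2) S T)
    (T.subtype ∘ₗ LinearMap.snd (ZMod 2) S T)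

lemma bmap_apply (φ : T →ₗ[ZMod 2] cpl S) (s : S) (t : T) :
    bmap φ (s, t) = ((s : V₁) + (φ t : V₁), (t : V₂)) := rfl

lemma mem_fst' (x : V₁ × V₂) : x ∈ Submodule.fst (ZMod 2) V₁ V₂ ↔ x.2 = 0 := by
  simp [Submodule.fst, LinearMap.mem_ker]

lemma mem_bmap_range (φ : T →ₗ[ZMod 2] cpl S) (x : V₁ × V₂) :
    x ∈ LinearMap.range (bmap φ) ↔ ∃ t : T, x.2 = (t : V₂) ∧ x.1 - (φ t : V₁) ∈ S := by
  constructor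
  · rintro ⟨⟨s, t⟩, rfl⟩
    exact ⟨t, rfl, by rw [bmap_apply]; simpa using s.2⟩
  · rintro ⟨t, h2, hs⟩
    refine ⟨(⟨x.1 - (φ t : V₁), hs⟩, t), ?_⟩
    rw [bmap_apply]
    simp [← h2]

lemma bmap_injective (φ : T →ₗ[ZMod 2] cpl S) : Function.Injective (bmap φ) := by
  rw [← LinearMap.ker_eq_bot]
  rw [eq_bot_iff]
  rintro ⟨s, t⟩ h
  rw [LinearMap.mem_ker, bmap_apply, Prod.mk_eq_zero] at h
  have ht : t = 0 := Subtype.ext h.2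
  rw [ht, map_zero] at h
  simp only [Submodule.coe_zero, add_zero] at h
  have hs : s = 0 := Subtype.ext h.1
  rw [Submodule.mem_bot, Prod.mk_eq_zero]
  exact ⟨hs, ht⟩

lemma bmap_range_inf_fst (φ : T →ₗ[ZMod 2] cpl S) :
    LinearMap.range (bmap φ) ⊓ Submodule.fst (ZMod 2) V₁ V₂ =
      S.map (LinearMap.inl (ZMod 2) V₁ V₂) := by
  ext x
  rw [Submodule.mem_inf, mem_bmap_range, mem_fst']
  constructor
  · rintro ⟨⟨t, h2, hs⟩, h0⟩
    have ht0 : t = 0 := by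
      apply Subtype.ext
      rw [← h2, h0]
      rfl
    rw [ht0, map_zero] at hs
    simp only [Submodule.coe_zero, sub_zero] at hs
    exact ⟨x.1, hs, Prod.ext rfl h0.symm⟩
  · rintro ⟨a, ha, rfl⟩
    exact ⟨⟨0, rfl, by simpa using ha⟩, rfl⟩

lemma bmap_range_map_snd (φ : T →ₗ[ZMod 2] cpl S) :
    (LinearMap.range (bmap φ)).map (LinearMap.snd (ZMod 2) V₁ V₂) = T := by
  ext y
  simp only [Submodule.mem_map]
  constructor
  · rintro ⟨x, hx, rfl⟩
    rw [mem_bmap_range] at hx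
    obtain ⟨t, h2, -⟩ := hx
    rw [LinearMap.snd_apply, h2]
    exact t.2
  · intro hy
    refine ⟨((φ ⟨y, hy⟩ : V₁), y), ?_, rfl⟩
    rw [mem_bmap_range]
    exact ⟨⟨y, hy⟩, rfl, by simp⟩

lemma finrank_comap_subtype {V : Type*} [AddCommGroup V] [Module (ZMod 2) V] [Finite V]
    (p q : Submodule (ZMod 2) V) :
    finrank (ZMod 2) (Submodule.comap q.subtype p) = finrank (ZMod 2) ↥(p ⊓ q) := by
  have h1 : Submodule.comap q.subtype p = Submodule.comap q.subtype (p ⊓ q) := by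
    ext x
    simp only [Submodule.mem_comap, Submodule.mem_inf]
    exact ⟨fun h => ⟨h, x.2⟩, fun h => h.1⟩
  rw [h1]
  exact (Submodule.comapSubtypeEquivOfLe inf_le_right).finrank_eq

variable (V₁ V₂) in
/-- the data parametrizing `k`-subspaces whose intersection with `V₁ × 0` has dimension `m` -/
abbrev BData (m : ℕ) :=
  Σ S : {S : Submodule (ZMod 2) V₁ // finrank (ZMod 2) S = m},
    Σ T : {T : Submodule (ZMod 2) V₂ // finrank (ZMod 2) T = finrank (ZMod 2) V₁ - m},
      (T.1 →ₗ[ZMod 2] cpl S.1)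

variable (V₁ V₂) in
abbrev BGrass (m : ℕ) :=
  {U : Submodule (ZMod 2) (V₁ × V₂) // finrank (ZMod 2) U = finrank (ZMod 2) V₁ ∧
    finrank (ZMod 2) ↥(U ⊓ Submodule.fst (ZMod 2) V₁ V₂) = m}

lemma finrank_map_inl (S : Submodule (ZMod 2) V₁) :
    finrank (ZMod 2) ↥(S.map (LinearMap.inl (ZMod 2) V₁ V₂)) = finrank (ZMod 2) S :=
  ((Submodule.equivMapOfInjective _ LinearMap.inl_injective S).finrank_eq).symm

noncomputable def theta (m : ℕ) (hm : m ≤ finrank (ZMod 2) V₁) (d : BData V₁ V₂ m) :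
    BGrass V₁ V₂ m := by
  haveI : FiniteDimensional (ZMod 2) V₁ := Module.Finite.of_finite
  haveI : FiniteDimensional (ZMod 2) V₂ := Module.Finite.of_finite
  refine ⟨LinearMap.range (bmap d.2.2), ?_, ?_⟩
  · rw [LinearMap.finrank_range_of_inj (bmap_injective d.2.2), Module.finrank_prod,
      d.1.2, d.2.1.2]
    omega
  · rw [bmap_range_inf_fst, finrank_map_inl, d.1.2]

lemma theta_injective (m : ℕ) (hm : m ≤ finrank (ZMod 2) V₁) :
    Function.Injective (theta (V₁ := V₁) (V₂ := V₂) m hm) := by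
  rintro ⟨S, T, φ⟩ ⟨S', T', φ'⟩ h
  have hr : LinearMap.range (bmap φ) = LinearMap.range (bmap φ') := congrArg Subtype.val h
  obtain rfl : T = T' := by
    apply Subtype.ext
    rw [← bmap_range_map_snd φ, ← bmap_range_map_snd φ', hr]
  obtain rfl : S = S' := by
    apply Subtype.ext
    apply Submodule.map_injective_of_injective (LinearMap.inl_injective (M := V₁) (M₂ := V₂))
    rw [← bmap_range_inf_fst φ, ← bmap_range_inf_fst φ', hr]
  have hφ : φ = φ' := by
    apply LinearMap.ext
    intro t
    have h1 : ((φ t : V₁), (t : V₂)) ∈ LinearMap.range (bmap φ) := by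
      rw [mem_bmap_range]
      exact ⟨t, rfl, by simp⟩
    rw [hr, mem_bmap_range] at h1
    obtain ⟨t', h2, hs⟩ := h1
    have htt : t = t' := Subtype.ext h2
    subst htt
    have hmem : ((φ t : V₁) - (φ' t : V₁)) ∈ cpl S.1 :=
      Submodule.sub_mem _ (φ t).2 (φ' t).2
    have h0 : (φ t : V₁) - (φ' t : V₁) = 0 :=
      Submodule.disjoint_def.mp (cpl_isCompl S.1).disjoint.symm _ hmem hs
    exact Subtype.ext (sub_eq_zero.mp h0)
  subst hφ
  rfl

lemma theta_surjective (m : ℕ) (hm : m ≤ finrank (ZMod 2) V₁) :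
    Function.Surjective (theta (V₁ := V₁) (V₂ := V₂) m hm) := by
  haveI : FiniteDimensional (ZMod 2) V₁ := Module.Finite.of_finite
  haveI : FiniteDimensional (ZMod 2) V₂ := Module.Finite.of_finite
  haveI : FiniteDimensional (ZMod 2) (V₁ × V₂) := Module.Finite.of_finite
  rintro ⟨U, hU1, hU2⟩
  set S : Submodule (ZMod 2) V₁ := Submodule.comap (LinearMap.inl (ZMod 2) V₁ V₂) U with hSdef
  have memS : ∀ a : V₁, a ∈ S ↔ (a, (0 : V₂)) ∈ U := fun a => Iff.rfl
  have hmapS : S.map (LinearMap.inl (ZMod 2) V₁ V₂) = U ⊓ Submodule.fst (ZMod 2) V₁ V₂ := by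
    ext x
    simp only [Submodule.mem_map, Submodule.mem_inf, mem_fst']
    constructor
    · rintro ⟨a, ha, rfl⟩
      exact ⟨(memS a).mp ha, rfl⟩
    · rintro ⟨hxU, hx2⟩
      have hx : ((x.1, (0 : V₂)) : V₁ × V₂) = x := Prod.ext rfl hx2.symm
      exact ⟨x.1, (memS x.1).mpr (by rw [hx]; exact hxU), hx⟩
  have hS : finrank (ZMod 2) S = m := by
    rw [← finrank_map_inl (V₂ := V₂) S, hmapS, hU2]
  set T : Submodule (ZMod 2) V₂ := U.map (LinearMap.snd (ZMod 2) V₁ V₂) with hTdef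
  -- rank computation for T
  set f : U →ₗ[ZMod 2] V₂ := (LinearMap.snd (ZMod 2) V₁ V₂).domRestrict U with hfdef
  have hrangef : LinearMap.range f = T := by
    ext y
    simp only [LinearMap.mem_range, hfdef, LinearMap.domRestrict_apply, hTdef,
      Submodule.mem_map, LinearMap.snd_apply]
    constructor
    · rintro ⟨u, rfl⟩; exact ⟨u, u.2, rfl⟩
    · rintro ⟨x, hx, rfl⟩; exact ⟨⟨x, hx⟩, rfl⟩
  have hkerf : finrank (ZMod 2) (LinearMap.ker f) = m := by
    rw [hfdef, LinearMap.ker_domRestrict]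
    have : LinearMap.ker (LinearMap.snd (ZMod 2) V₁ V₂) = Submodule.fst (ZMod 2) V₁ V₂ := rfl
    rw [this, finrank_comap_subtype, inf_comm, hU2]
  have hT : finrank (ZMod 2) T = finrank (ZMod 2) V₁ - m := by
    have := LinearMap.finrank_range_add_finrank_ker f
    rw [hrangef, hkerf, hU1] at this
    omega
  -- the section
  have hπ : ∀ u : U, f u ∈ T := by
    intro u
    rw [← hrangef]
    exact ⟨u, rfl⟩
  set π : U →ₗ[ZMod 2] T := f.codRestrict T hπ with hπdef
  have hπsurj : LinearMap.range π = ⊤ := by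
    rw [LinearMap.range_eq_top]
    rintro ⟨y, hy⟩
    rw [hTdef] at hy
    obtain ⟨x, hx, rfl⟩ := hy
    exact ⟨⟨x, hx⟩, rfl⟩
  obtain ⟨σ, hσ⟩ := π.exists_rightInverse_of_surjective hπsurj
  set proj : V₁ →ₗ[ZMod 2] cpl S := (cpl S).projectionOnto S (cpl_isCompl S).symm
    with hprojdef
  set φ : T →ₗ[ZMod 2] cpl S :=
    proj ∘ₗ (LinearMap.fst (ZMod 2) V₁ V₂) ∘ₗ U.subtype ∘ₗ σ with hφdef
  refine ⟨⟨⟨S, hS⟩, ⟨T, hT⟩, φ⟩, ?_⟩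
  apply Subtype.ext
  show LinearMap.range (bmap φ) = U
  haveI : FiniteDimensional (ZMod 2) U := inferInstance
  apply Submodule.eq_of_le_of_finrank_eq
  · intro x hx
    rw [mem_bmap_range] at hx
    obtain ⟨t, h2, hs⟩ := hx
    set u : U := σ t with hudef
    have hu2 : (u : V₁ × V₂).2 = (t : V₂) := by
      have : π (σ t) = t := by
        have := LinearMap.ext_iff.mp hσ t
        simpa using this
      have := congrArg Subtype.val this
      exact this
    have hφt : (φ t : V₁) = (proj ((u : V₁ × V₂).1) : V₁) := rfl
    -- u.1 - proj u.1 ∈ S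
    have hker : ((u : V₁ × V₂).1 - (proj ((u : V₁ × V₂).1) : V₁)) ∈ S := by
      have hk : LinearMap.ker proj = S := Submodule.ker_projectionOnto _
      have hz : proj ((u : V₁ × V₂).1 - (proj ((u : V₁ × V₂).1) : V₁)) = 0 := by
        rw [map_sub, hprojdef, Submodule.projectionOnto_apply_left, sub_self]
      have hmem := LinearMap.mem_ker.mpr hz
      rwa [hk] at hmem
    -- x - u ∈ U
    have hdiff : x - (u : V₁ × V₂) ∈ U := by
      have hx1 : x.1 - (u : V₁ × V₂).1 ∈ S := by
        have : x.1 - (u : V₁ × V₂).1 =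
            (x.1 - (φ t : V₁)) - ((u : V₁ × V₂).1 - (φ t : V₁)) := by abel
        rw [this, hφt]
        exact Submodule.sub_mem _ hs hker
      have h22 : x.2 - (u : V₁ × V₂).2 = 0 := by rw [hu2, h2, sub_self]
      have : x - (u : V₁ × V₂) = ((x.1 - (u : V₁ × V₂).1, (0 : V₂)) : V₁ × V₂) := by
        calc x - (u : V₁ × V₂) = (x.1 - (u : V₁ × V₂).1, x.2 - (u : V₁ × V₂).2) := rfl
          _ = (x.1 - (u : V₁ × V₂).1, (0 : V₂)) := by rw [h22]
      rw [this]
      exact (memS _).mp hx1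
    have : x = (x - (u : V₁ × V₂)) + (u : V₁ × V₂) := by abel
    rw [this]
    exact Submodule.add_mem _ hdiff u.2
  · rw [LinearMap.finrank_range_of_inj (bmap_injective φ), Module.finrank_prod, hS, hT, hU1]
    omega

instance {M N : Type*} [AddCommGroup M] [Module (ZMod 2) M] [AddCommGroup N] [Module (ZMod 2) N]
    [Finite M] [Finite N] : Finite (M →ₗ[ZMod 2] N) :=
  Finite.of_injective (fun f => (f : M → N)) DFunLike.coe_injective

lemma card_hom {M N : Type*} [AddCommGroup M] [Module (ZMod 2) M] [AddCommGroup N]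
    [Module (ZMod 2) N] [Finite M] [Finite N] :
    Nat.card (M →ₗ[ZMod 2] N) = 2 ^ (finrank (ZMod 2) M * finrank (ZMod 2) N) := by
  haveI : FiniteDimensional (ZMod 2) M := Module.Finite.of_finite
  haveI : FiniteDimensional (ZMod 2) N := Module.Finite.of_finite
  haveI : Fintype (M →ₗ[ZMod 2] N) := Fintype.ofFinite _
  rw [Nat.card_eq_fintype_card, card_eq_pow_finrank (K := ZMod 2), card_zmod2,
    Module.finrank_linearMap]

lemma card_BGrass (m : ℕ) (hm : m ≤ finrank (ZMod 2) V₁) :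
    Nat.card (BGrass V₁ V₂ m) =
      2 ^ ((finrank (ZMod 2) V₁ - m) * (finrank (ZMod 2) V₁ - m)) *
        gbinomN (finrank (ZMod 2) V₂) (finrank (ZMod 2) V₁ - m) *
        gbinomN (finrank (ZMod 2) V₁) m := by
  haveI : FiniteDimensional (ZMod 2) V₁ := Module.Finite.of_finite
  rw [← Nat.card_congr (Equiv.ofBijective _ ⟨theta_injective (V₂ := V₂) m hm,
    theta_surjective m hm⟩)]
  have hinner : ∀ S : {S : Submodule (ZMod 2) V₁ // finrank (ZMod 2) S = m},
      Nat.card (Σ T : {T : Submodule (ZMod 2) V₂ //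
          finrank (ZMod 2) T = finrank (ZMod 2) V₁ - m}, (T.1 →ₗ[ZMod 2] cpl S.1)) =
        gbinomN (finrank (ZMod 2) V₂) (finrank (ZMod 2) V₁ - m) *
          2 ^ ((finrank (ZMod 2) V₁ - m) * (finrank (ZMod 2) V₁ - m)) := by
    intro S
    have hcplrank : finrank (ZMod 2) (cpl S.1) = finrank (ZMod 2) V₁ - m := by
      have := Submodule.finrank_add_eq_of_isCompl (cpl_isCompl S.1)
      rw [S.2] at this
      omega
    have hc : ∀ T : {T : Submodule (ZMod 2) V₂ //
        finrank (ZMod 2) T = finrank (ZMod 2) V₁ - m},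
        Nat.card (T.1 →ₗ[ZMod 2] cpl S.1) =
          2 ^ ((finrank (ZMod 2) V₁ - m) * (finrank (ZMod 2) V₁ - m)) := by
      intro T
      rw [card_hom, T.2, hcplrank]
    rw [nat_card_sigma_const hc, card_grassmannian]
  rw [nat_card_sigma_const hinner, card_grassmannian]
  ring

lemma card_inter_general {V : Type*} [AddCommGroup V] [Module (ZMod 2) V] [Finite V]
    {n k : ℕ} (hV : finrank (ZMod 2) V = n) (W : Submodule (ZMod 2) V)
    (hW : finrank (ZMod 2) W = k) (m : ℕ) (hm : m ≤ k) :
    Nat.card {U : Submodule (ZMod 2) V //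
        finrank (ZMod 2) U = k ∧ finrank (ZMod 2) ↥(U ⊓ W) = m} =
      2 ^ ((k - m) * (k - m)) * gbinomN (n - k) (k - m) * gbinomN k m := by
  haveI : FiniteDimensional (ZMod 2) V := Module.Finite.of_finite
  obtain ⟨W', hWc⟩ := Submodule.exists_isCompl W
  have hW' : finrank (ZMod 2) W' = n - k := by
    have := Submodule.finrank_add_eq_of_isCompl hWc
    rw [hW, hV] at this
    omega
  set e : (W × W') ≃ₗ[ZMod 2] V := Submodule.prodEquivOfIsCompl W W' hWc with hedef
  set o : Submodule (ZMod 2) (W × W') ≃o Submodule (ZMod 2) V :=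
    Submodule.orderIsoMapComap e with hodef
  have ho_apply : ∀ p : Submodule (ZMod 2) (W × W'), o p = Submodule.map (e : W × W' →ₗ[ZMod 2] V) p := fun _ => rfl
  have hofst : o (Submodule.fst (ZMod 2) W W') = W := by
    rw [ho_apply]
    ext x
    simp only [Submodule.mem_map]
    constructor
    · rintro ⟨⟨a, b⟩, hab, rfl⟩
      rw [mem_fst'] at hab
      rw [hedef, LinearEquiv.coe_coe, Submodule.coe_prodEquivOfIsCompl']
      rw [hab]
      simp
    · intro hx
      refine ⟨(⟨x, hx⟩, 0), (mem_fst' _).mpr rfl, ?_⟩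
      rw [hedef, LinearEquiv.coe_coe, Submodule.coe_prodEquivOfIsCompl']
      simp
  have hrank : ∀ p : Submodule (ZMod 2) (W × W'),
      finrank (ZMod 2) (o p) = finrank (ZMod 2) p := by
    intro p
    rw [ho_apply]
    exact (LinearEquiv.finrank_map_eq e p)
  have hWrank : finrank (ZMod 2) ↥W = k := hW
  have E : BGrass ↥W ↥W' m ≃ {U : Submodule (ZMod 2) V //
      finrank (ZMod 2) U = k ∧ finrank (ZMod 2) ↥(U ⊓ W) = m} := by
    refine ⟨fun U => ⟨o U.1, ?_, ?_⟩, fun U => ⟨o.symm U.1, ?_, ?_⟩, ?_, ?_⟩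
    · rw [hrank, U.2.1, hWrank]
    · have h1 : o (U.1 ⊓ Submodule.fst (ZMod 2) ↥W ↥W') = o U.1 ⊓ W := by
        rw [o.map_inf, hofst]
      rw [← h1, hrank]
      exact U.2.2
    · have : finrank (ZMod 2) (o (o.symm U.1)) = finrank (ZMod 2) (o.symm U.1) :=
        hrank _
      rw [o.apply_symm_apply] at this
      rw [← this, U.2.1, hWrank]
    · have h1 : o (o.symm U.1 ⊓ Submodule.fst (ZMod 2) ↥W ↥W') = U.1 ⊓ W := by
        rw [o.map_inf, o.apply_symm_apply, hofst]
      have : finrank (ZMod 2) ↥(o (o.symm U.1 ⊓ Submodule.fst (ZMod 2) ↥W ↥W')) =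
          finrank (ZMod 2) ↥(o.symm U.1 ⊓ Submodule.fst (ZMod 2) ↥W ↥W') := hrank _
      rw [h1] at this
      rw [← this]
      exact U.2.2
    · intro U; apply Subtype.ext; exact o.symm_apply_apply U.1
    · intro U; apply Subtype.ext; exact o.apply_symm_apply U.1
  rw [← Nat.card_congr E, card_BGrass m (by rw [hWrank]; exact hm), hWrank, hW']

end ProdCount


section Hall

lemma exists_perm_family {S : Type*} [Finite S] (d : ℕ) (R : S → S → Prop)
    (hrow : ∀ a, Nat.card {b // R a b} = d)
    (hcol : ∀ b, Nat.card {a // R a b} = d) :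
    ∃ f : Fin d → Equiv.Perm S, (∀ i a, R a (f i a)) ∧
      (∀ i j, i ≠ j → ∀ a, f i a ≠ f j a) := by
  classical
  cases nonempty_fintype S
  induction d generalizing R with
  | zero => exact ⟨Fin.elim0, fun i => i.elim0, fun i => i.elim0⟩
  | succ d ih =>
    have hrowf : ∀ a, (Finset.univ.filter (fun b => R a b)).card = d + 1 := by
      intro a
      have := hrow a
      rwa [Nat.card_eq_fintype_card, Fintype.card_subtype] at this
    have hcolf : ∀ b, (Finset.univ.filter (fun a => R a b)).card = d + 1 := by
      intro b
      have := hcol b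
      rwa [Nat.card_eq_fintype_card, Fintype.card_subtype] at this
    -- Hall's condition
    have hall : ∀ A : Finset S,
        A.card ≤ (A.biUnion (fun a => Finset.univ.filter (fun b => R a b))).card := by
      intro A
      set B := A.biUnion (fun a => Finset.univ.filter (fun b => R a b)) with hB
      have h1 : ∀ a ∈ A, (Finset.univ.filter (fun b => R a b)).card =
          (B.filter (fun b => R a b)).card := by
        intro a ha
        congr 1
        apply Finset.Subset.antisymm
        · intro b hb
          rw [Finset.mem_filter] at hb ⊢
          exact ⟨Finset.mem_biUnion.mpr ⟨a, ha, Finset.mem_filter.mpr ⟨Finset.mem_univ _, hb.2⟩⟩,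
            hb.2⟩
        · intro b hb
          rw [Finset.mem_filter] at hb ⊢
          exact ⟨Finset.mem_univ _, hb.2⟩
      have h2 : (d + 1) * A.card = ∑ a ∈ A, (B.filter (fun b => R a b)).card := by
        rw [← Finset.sum_congr rfl h1]
        simp [hrowf, mul_comm]
      have h3 : ∑ a ∈ A, (B.filter (fun b => R a b)).card =
          ∑ b ∈ B, (A.filter (fun a => R a b)).card := by
        simp only [Finset.card_filter]
        exact Finset.sum_comm
      have h4 : ∑ b ∈ B, (A.filter (fun a => R a b)).card ≤ (d + 1) * B.card := by
        rw [mul_comm, Finset.card_eq_sum_ones B, Finset.sum_mul, one_mul]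
        apply Finset.sum_le_sum
        intro b _
        calc (A.filter (fun a => R a b)).card
            ≤ (Finset.univ.filter (fun a => R a b)).card :=
              Finset.card_le_card (Finset.filter_subset_filter _ (Finset.subset_univ A))
          _ = d + 1 := hcolf b
      have := h2.le.trans (h3.le.trans h4)
      exact Nat.le_of_mul_le_mul_left this (Nat.succ_pos d)
    obtain ⟨g, hginj, hg⟩ :=
      (Finset.all_card_le_biUnion_card_iff_exists_injective _).mp hall
    have hbij : Function.Bijective g := Finite.injective_iff_bijective.mp hginj
    set π := Equiv.ofBijective g hbij with hπ
    have hπa : ∀ a, R a (π a) := by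
      intro a
      have := hg a
      rw [Finset.mem_filter] at this
      exact this.2
    set R' : S → S → Prop := fun a b => R a b ∧ b ≠ π a with hR'
    have hrow' : ∀ a, Nat.card {b // R' a b} = d := by
      intro a
      rw [Nat.card_eq_fintype_card, Fintype.card_subtype]
      have : Finset.univ.filter (fun b => R' a b) =
          (Finset.univ.filter (fun b => R a b)).erase (π a) := by
        ext b
        simp only [Finset.mem_filter, Finset.mem_erase, Finset.mem_univ, true_and, hR']
        tauto
      rw [this, Finset.card_erase_of_mem
        (show π a ∈ Finset.univ.filter (fun b => R a b) from
          Finset.mem_filter.mpr ⟨Finset.mem_univ _, hπa a⟩), hrowf]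
      omega
    have hcol' : ∀ b, Nat.card {a // R' a b} = d := by
      intro b
      rw [Nat.card_eq_fintype_card, Fintype.card_subtype]
      have hmem : R (π.symm b) b := by
        have := hπa (π.symm b)
        rwa [Equiv.apply_symm_apply] at this
      have : Finset.univ.filter (fun a => R' a b) =
          (Finset.univ.filter (fun a => R a b)).erase (π.symm b) := by
        ext a
        simp only [Finset.mem_filter, Finset.mem_erase, Finset.mem_univ, true_and, hR']
        constructor
        · rintro ⟨h1, h2⟩
          refine ⟨fun hc => h2 ?_, h1⟩
          rw [hc, Equiv.apply_symm_apply]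
        · rintro ⟨h1, h2⟩
          refine ⟨h2, fun hc => h1 ?_⟩
          rw [hc, Equiv.symm_apply_apply]
      rw [this, Finset.card_erase_of_mem
        (show π.symm b ∈ Finset.univ.filter (fun a => R a b) from
          Finset.mem_filter.mpr ⟨Finset.mem_univ _, hmem⟩), hcolf]
      omega
    obtain ⟨f', hf'1, hf'2⟩ := ih R' hrow' hcol'
    refine ⟨Fin.cons π f', ?_, ?_⟩
    · intro i a
      induction i using Fin.cases with
      | zero => simpa using hπa a
      | succ i => simpa using (hf'1 i a).1
    · intro i j hij a
      induction i using Fin.cases with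
      | zero =>
        induction j using Fin.cases with
        | zero => exact absurd rfl hij
        | succ j =>
          simp only [Fin.cons_zero, Fin.cons_succ]
          exact fun hc => (hf'1 j a).2 hc.symm
      | succ i =>
        induction j using Fin.cases with
        | zero =>
          simp only [Fin.cons_zero, Fin.cons_succ]
          exact fun hc => (hf'1 i a).2 hc
        | succ j =>
          simp only [Fin.cons_succ]
          exact hf'2 i j (fun hc => hij (by rw [hc])) a

end Hall


section Assembly

variable {n k : ℕ}

lemma finrank_funspace : finrank (ZMod 2) (Fin n → ZMod 2) = n := by
  rw [Module.finrank_fintype_fun_eq_card, Fintype.card_fin]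

/-- the intersection relation on the Grassmannian -/
def IRel (n k m : ℕ) (W U : Grassmannian n k) : Prop :=
  finrank (ZMod 2) ↥(W.1 ⊓ U.1) = m

lemma card_col (hkn : k ≤ n) (m : ℕ) (hm : m ≤ k) (U : Grassmannian n k) :
    Nat.card {W : Grassmannian n k // IRel n k m W U} =
      2 ^ ((k - m) * (k - m)) * gbinomN (n - k) (k - m) * gbinomN k m := by
  have e : {W : Grassmannian n k // IRel n k m W U} ≃
      {X : Submodule (ZMod 2) (Fin n → ZMod 2) //
        finrank (ZMod 2) X = k ∧ finrank (ZMod 2) ↥(X ⊓ U.1) = m} :=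
    ⟨fun W => ⟨W.1.1, W.1.2, W.2⟩, fun X => ⟨⟨X.1, X.2.1⟩, X.2.2⟩,
      fun _ => rfl, fun _ => rfl⟩
  rw [Nat.card_congr e]
  exact card_inter_general finrank_funspace U.1 U.2 m hm

lemma card_row (hkn : k ≤ n) (m : ℕ) (hm : m ≤ k) (W : Grassmannian n k) :
    Nat.card {U : Grassmannian n k // IRel n k m W U} =
      2 ^ ((k - m) * (k - m)) * gbinomN (n - k) (k - m) * gbinomN k m := by
  have e : {U : Grassmannian n k // IRel n k m W U} ≃
      {U : Grassmannian n k // IRel n k m U W} :=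
    ⟨fun U => ⟨U.1, by unfold IRel at *; rw [inf_comm]; exact U.2⟩,
     fun U => ⟨U.1, by unfold IRel at *; rw [inf_comm]; exact U.2⟩,
     fun _ => rfl, fun _ => rfl⟩
  rw [Nat.card_congr e]
  exact card_col hkn m hm W

/-- a fixed base point of the Grassmannian -/
noncomputable def W0 (hkn : k ≤ n) : Grassmannian n k := by
  refine ⟨Submodule.span (ZMod 2)
    (Set.range ((Pi.basisFun (ZMod 2) (Fin n)) ∘ Fin.castLE hkn)), ?_⟩
  have hind : LinearIndependent (ZMod 2)
      ((Pi.basisFun (ZMod 2) (Fin n)) ∘ Fin.castLE hkn) :=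
    (Pi.basisFun (ZMod 2) (Fin n)).linearIndependent.comp _ (Fin.castLE_injective hkn)
  rw [finrank_span_eq_card hind, Fintype.card_fin]

lemma sum_counts (hkn : k ≤ n) :
    ∑ m ∈ Finset.range (k + 1),
      2 ^ ((k - m) * (k - m)) * gbinomN (n - k) (k - m) * gbinomN k m = gbinomN n k := by
  classical
  haveI : Fintype (Grassmannian n k) := Fintype.ofFinite _
  have hcardS : Fintype.card (Grassmannian n k) = gbinomN n k := by
    rw [← Nat.card_eq_fintype_card, card_grassmannian, finrank_funspace]
  rw [← hcardS]
  have hfiber : ∀ U : Grassmannian n k,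
      finrank (ZMod 2) ↥((W0 hkn).1 ⊓ U.1) ∈ Finset.range (k + 1) := by
    intro U
    rw [Finset.mem_range]
    have : finrank (ZMod 2) ↥((W0 hkn).1 ⊓ U.1) ≤ finrank (ZMod 2) ↥(W0 hkn).1 :=
      Submodule.finrank_mono inf_le_left
    rw [(W0 hkn).2] at this
    omega
  have := Finset.card_eq_sum_card_fiberwise (s := (Finset.univ : Finset (Grassmannian n k)))
    (f := fun U : Grassmannian n k =>
      finrank (ZMod 2) ↥((W0 hkn).1 ⊓ U.1)) (t := Finset.range (k + 1))
    (fun U _ => hfiber U)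
  rw [← Finset.card_univ, this]
  apply Finset.sum_congr rfl
  intro m hmr
  rw [Finset.mem_range] at hmr
  have := card_row hkn m (by omega) (W0 hkn)
  rw [← this, Nat.card_eq_fintype_card, Fintype.card_subtype]
  congr 1
  apply Finset.filter_congr
  intro U _
  rfl

end Assembly

end

/-- For `0 ≤ k ≤ n` there is a collection of `[n choose k]₂` mutually
orthogonal permutations of `Gr₂(n,k)` such that for each `0 ≤ m ≤ k`, exactly
`2^{(k-m)²}·[n-k choose k-m]₂·[k choose m]₂` of them have the `m`-intersection property. -/
theorem exists_full_family_of_mutually_orthogonal_permutations {n k : ℕ} (hkn : k ≤ n) :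
    ∃ π : Fin (gbinomN n k) → Equiv.Perm (Grassmannian n k),
      (∀ i j, i ≠ j → ∀ W, π i W ≠ π j W) ∧
      (∀ m ≤ k, Nat.card {i : Fin (gbinomN n k) // HasIntersectionProperty (π i) m} =
        2 ^ ((k - m) ^ 2) * gbinomN (n - k) (k - m) * gbinomN k m) := by
  classical
  set d : ℕ → ℕ := fun m => 2 ^ ((k - m) * (k - m)) * gbinomN (n - k) (k - m) * gbinomN k m
    with hd
  -- the permutation families within each class
  have hfam : ∀ m : Fin (k + 1), ∃ f : Fin (d m.val) → Equiv.Perm (Grassmannian n k),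
      (∀ i W, IRel n k m.val W (f i W)) ∧
      (∀ i j, i ≠ j → ∀ W, f i W ≠ f j W) := by
    intro m
    exact exists_perm_family (d m.val) (IRel n k m.val)
      (fun W => card_row hkn m.val (by omega) W)
      (fun U => card_col hkn m.val (by omega) U)
  choose F hF1 hF2 using hfam
  -- the index equivalence
  haveI : Fintype (Grassmannian n k) := Fintype.ofFinite _
  have hcard : Fintype.card (Fin (gbinomN n k)) =
      Fintype.card (Σ m : Fin (k + 1), Fin (d m.val)) := by
    rw [Fintype.card_fin, Fintype.card_sigma]
    simp only [Fintype.card_fin]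
    rw [← sum_counts hkn, Fin.sum_univ_eq_sum_range (fun m => d m)]
  set E := Fintype.equivOfCardEq hcard with hE
  refine ⟨fun i => F (E i).1 (E i).2, ?_, ?_⟩
  · intro i j hij W
    show F (E i).1 (E i).2 W ≠ F (E j).1 (E j).2 W
    rcases hEi : E i with ⟨mi, ii⟩
    rcases hEj : E j with ⟨mj, jj⟩
    by_cases hm : mi = mj
    · subst hm
      have hne : ii ≠ jj := by
        intro hc
        apply hij
        apply E.injective
        rw [hEi, hEj, hc]
      exact hF2 mi ii jj hne W
    · intro hc
      apply hm
      have h1 : finrank (ZMod 2) ↥(W.1 ⊓ (F mi ii W).1) = mi.val := hF1 mi ii W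
      have h2 : finrank (ZMod 2) ↥(W.1 ⊓ (F mj jj W).1) = mj.val := hF1 mj jj W
      rw [hc] at h1
      apply Fin.ext
      rw [← h1, ← h2]
  · intro m hm
    set m' : Fin (k + 1) := ⟨m, by omega⟩ with hm'
    have hiff : ∀ i : Fin (gbinomN n k),
        HasIntersectionProperty (F (E i).1 (E i).2) m ↔ (E i).1 = m' := by
      intro i
      constructor
      · intro h
        have h1 := h (W0 hkn)
        have h2 : finrank (ZMod 2) ↥((W0 hkn).1 ⊓ (F (E i).1 (E i).2 (W0 hkn)).1) =
            (E i).1.val := hF1 (E i).1 (E i).2 (W0 hkn)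
        apply Fin.ext
        show ((E i).1 : ℕ) = m
        rw [← h2]
        exact h1
      · intro h W
        have hval : ((E i).1 : ℕ) = m := congrArg Fin.val h
        have := hF1 (E i).1 (E i).2 W
        rw [hval] at this
        exact this
    have e1 : {i : Fin (gbinomN n k) // HasIntersectionProperty (F (E i).1 (E i).2) m} ≃
        {i : Fin (gbinomN n k) // (E i).1 = m'} :=
      Equiv.subtypeEquivRight hiff
    have e2 : {i : Fin (gbinomN n k) // (E i).1 = m'} ≃
        {p : Σ m'' : Fin (k + 1), Fin (d m''.val) // p.1 = m'} :=
      E.subtypeEquiv (fun i => Iff.rfl)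
    have e3 : {p : Σ m'' : Fin (k + 1), Fin (d m''.val) // p.1 = m'} ≃ Fin (d m) := by
      refine ⟨fun p => Fin.cast (by rw [p.2]) p.1.2, fun j => ⟨⟨m', j⟩, rfl⟩, ?_, ?_⟩
      · rintro ⟨⟨m'', j⟩, hp⟩
        apply Subtype.ext
        refine Sigma.ext hp.symm ?_
        exact (Fin.heq_ext_iff
          ((congrArg (fun x : Fin (k + 1) => d x.val) (show m'' = m' from hp)).symm)).mpr rfl
      · intro j
        rfl
    rw [Nat.card_congr ((e1.trans e2).trans e3), Nat.card_eq_fintype_card, Fintype.card_fin,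
      hd, sq]
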